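/- Let u(x) = x¹ (2 + sin ln ln ln(64/|x|)) on B₄ \ {0} ⊂ ℝⁿ, n ≥ 2. Then ∇u ∈ L^∞(B₄) but ∇u does not extend continuously to the origin (i.e., ∇u has no limit as x → 0). -/

import Mathlib

open Real MeasureTheory Metric

set_option maxHeartbeats 1000000
set_option synthInstance.maxHeartbeats 200000

section Aux

variable {E : Type*} [NormedAddCommGroup E] [InnerProductSpace ℝ E]

lemma hasFDerivAt_norm' (x : E) (hx : x ≠ 0) :
    HasFDerivAt (fun y : E => ‖y‖) (‖x‖⁻¹ • innerSL ℝ x) x := by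
  have h2 : HasFDerivAt (fun y : E => ‖y‖ ^ 2) (2 • innerSL ℝ x) x :=
    (hasStrictFDerivAt_norm_sq x).hasFDerivAt
  have hs : ‖x‖ ^ 2 ≠ 0 := pow_ne_zero 2 (norm_ne_zero_iff.2 hx)
  have hsq := (Real.hasDerivAt_sqrt hs).comp_hasFDerivAt x h2
  have : (fun y : E => Real.sqrt (‖y‖ ^ 2)) = fun y : E => ‖y‖ := by
    funext y; rw [Real.sqrt_sq (norm_nonneg y)]
  simp only [Function.comp_def] at hsq; rw [this] at hsq
  convert hsq using 1
  rfl
  rfl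
  rw [Real.sqrt_sq (norm_nonneg x)]
  ext v
  simp only [ContinuousLinearMap.smul_apply, ContinuousLinearMap.coe_smul', Pi.smul_apply,
    smul_eq_mul]
  ring

lemma hasFDerivAt_u (n : ℕ) (hn : 0 < n) (x : EuclideanSpace ℝ (Fin n)) (hx : x ≠ 0)
    (hL1 : Real.log (64 / ‖x‖) ≠ 0) (hL2 : Real.log (Real.log (64 / ‖x‖)) ≠ 0) :
    HasFDerivAt (fun y : EuclideanSpace ℝ (Fin n) =>
      y ⟨0, hn⟩ * (2 + Real.sin (Real.log (Real.log (Real.log (64 / ‖y‖))))))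
      ((x ⟨0, hn⟩ * (-(Real.cos (Real.log (Real.log (Real.log (64 / ‖x‖))))) /
          (Real.log (Real.log (64 / ‖x‖)) * Real.log (64 / ‖x‖) * ‖x‖))) •
          (‖x‖⁻¹ • innerSL ℝ x) +
       (2 + Real.sin (Real.log (Real.log (Real.log (64 / ‖x‖))))) •
         (EuclideanSpace.proj (⟨0, hn⟩ : Fin n) : EuclideanSpace ℝ (Fin n) →L[ℝ] ℝ)) x := by
  have hr : (0:ℝ) < ‖x‖ := norm_pos_iff.2 hx
  have h64 : (64:ℝ) / ‖x‖ ≠ 0 := by positivity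
  have hdiv : HasDerivAt (fun t : ℝ => 64 / t) (64 * -((‖x‖ ^ 2)⁻¹)) ‖x‖ := by
    simpa [div_eq_mul_inv] using (hasDerivAt_inv hr.ne').const_mul (64:ℝ)
  have hlog1 : HasDerivAt (fun t : ℝ => Real.log (64 / t))
      ((64 / ‖x‖)⁻¹ * (64 * -((‖x‖ ^ 2)⁻¹))) ‖x‖ :=
    (Real.hasDerivAt_log h64).comp ‖x‖ hdiv
  have hlog2 : HasDerivAt (fun t : ℝ => Real.log (Real.log (64 / t)))
      ((Real.log (64 / ‖x‖))⁻¹ * ((64 / ‖x‖)⁻¹ * (64 * -((‖x‖ ^ 2)⁻¹)))) ‖x‖ :=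
    by have := (Real.hasDerivAt_log hL1).comp ‖x‖ hlog1; exact this
  have hlog3 : HasDerivAt (fun t : ℝ => Real.log (Real.log (Real.log (64 / t))))
      ((Real.log (Real.log (64 / ‖x‖)))⁻¹ *
        ((Real.log (64 / ‖x‖))⁻¹ * ((64 / ‖x‖)⁻¹ * (64 * -((‖x‖ ^ 2)⁻¹))))) ‖x‖ :=
    by have := (Real.hasDerivAt_log hL2).comp ‖x‖ hlog2; exact this
  have hsin : HasDerivAt (fun t : ℝ => Real.sin (Real.log (Real.log (Real.log (64 / t)))))
      (Real.cos (Real.log (Real.log (Real.log (64 / ‖x‖)))) *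
        ((Real.log (Real.log (64 / ‖x‖)))⁻¹ *
        ((Real.log (64 / ‖x‖))⁻¹ * ((64 / ‖x‖)⁻¹ * (64 * -((‖x‖ ^ 2)⁻¹)))))) ‖x‖ :=
    (Real.hasDerivAt_sin _).comp ‖x‖ hlog3
  have hg : HasFDerivAt (fun y : EuclideanSpace ℝ (Fin n) =>
      Real.sin (Real.log (Real.log (Real.log (64 / ‖y‖)))))
      ((Real.cos (Real.log (Real.log (Real.log (64 / ‖x‖)))) *
        ((Real.log (Real.log (64 / ‖x‖)))⁻¹ *
        ((Real.log (64 / ‖x‖))⁻¹ * ((64 / ‖x‖)⁻¹ * (64 * -((‖x‖ ^ 2)⁻¹)))))) •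
        (‖x‖⁻¹ • innerSL ℝ x)) x :=
    hsin.comp_hasFDerivAt x (hasFDerivAt_norm' x hx)
  have hproj : HasFDerivAt (fun y : EuclideanSpace ℝ (Fin n) => y ⟨0, hn⟩)
      (EuclideanSpace.proj (⟨0, hn⟩ : Fin n) : EuclideanSpace ℝ (Fin n) →L[ℝ] ℝ) x := by
    have := (EuclideanSpace.proj (⟨0, hn⟩ : Fin n) :
      EuclideanSpace ℝ (Fin n) →L[ℝ] ℝ).hasFDerivAt (x := x)
    exact this
  have h2g : HasFDerivAt (fun y : EuclideanSpace ℝ (Fin n) =>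
      2 + Real.sin (Real.log (Real.log (Real.log (64 / ‖y‖)))))
      ((Real.cos (Real.log (Real.log (Real.log (64 / ‖x‖)))) *
        ((Real.log (Real.log (64 / ‖x‖)))⁻¹ *
        ((Real.log (64 / ‖x‖))⁻¹ * ((64 / ‖x‖)⁻¹ * (64 * -((‖x‖ ^ 2)⁻¹)))))) •
        (‖x‖⁻¹ • innerSL ℝ x)) x := by
    exact hg.const_add 2
  have hmul := hproj.mul h2g
  have hscal : (Real.cos (Real.log (Real.log (Real.log (64 / ‖x‖)))) *
        ((Real.log (Real.log (64 / ‖x‖)))⁻¹ *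
        ((Real.log (64 / ‖x‖))⁻¹ * ((64 / ‖x‖)⁻¹ * (64 * -((‖x‖ ^ 2)⁻¹)))))) =
      -(Real.cos (Real.log (Real.log (Real.log (64 / ‖x‖))))) /
          (Real.log (Real.log (64 / ‖x‖)) * Real.log (64 / ‖x‖) * ‖x‖) := by
    field_simp
  rw [hscal, smul_smul] at hmul
  exact hmul

lemma coord_le_norm (n : ℕ) (i : Fin n) (y : EuclideanSpace ℝ (Fin n)) : |y i| ≤ ‖y‖ := by
  have h : y i = @inner ℝ _ _ (EuclideanSpace.single i (1:ℝ)) y := by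
    rw [EuclideanSpace.inner_single_left]; simp
  rw [h]
  calc |@inner ℝ _ _ (EuclideanSpace.single i (1:ℝ)) y| ≤ ‖EuclideanSpace.single i (1:ℝ)‖ * ‖y‖ :=
        abs_real_inner_le_norm _ _
    _ = ‖y‖ := by rw [EuclideanSpace.norm_single]; simp

lemma log_bounds {r : ℝ} (hr : 0 < r) (hr4 : r < 4) :
    2 < Real.log (64 / r) ∧ 1 < Real.log (Real.log (64 / r)) := by
  have h16 : (16:ℝ) < 64 / r := by rw [lt_div_iff₀ hr]; nlinarith
  have hlog16 : Real.log 16 = 4 * Real.log 2 := by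
    rw [show (16:ℝ) = 2 ^ 4 by norm_num, Real.log_pow]; norm_num
  have hl2 := Real.log_two_gt_d9
  have he := Real.exp_one_lt_d9
  have hmono : Real.log 16 ≤ Real.log (64 / r) := Real.log_le_log (by norm_num) h16.le
  have h1 : 2 < Real.log (64 / r) := by
    have : (2:ℝ) < Real.log 16 := by rw [hlog16]; nlinarith
    linarith
  refine ⟨h1, ?_⟩
  rw [Real.lt_log_iff_exp_lt (by linarith)]
  have : Real.exp 1 < Real.log 16 := by rw [hlog16]; nlinarith
  linarith

lemma norm_fderiv_le (n : ℕ) (hn : 0 < n) (x : EuclideanSpace ℝ (Fin n)) (hx : x ≠ 0)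
    (hx4 : ‖x‖ < 4) :
    ‖fderiv ℝ (fun y : EuclideanSpace ℝ (Fin n) =>
      y ⟨0, hn⟩ * (2 + Real.sin (Real.log (Real.log (Real.log (64 / ‖y‖)))))) x‖ ≤ 4 := by
  have hr : (0:ℝ) < ‖x‖ := norm_pos_iff.2 hx
  obtain ⟨hL1, hL2⟩ := log_bounds hr hx4
  rw [(hasFDerivAt_u n hn x hx (by linarith) (by linarith)).fderiv]
  refine (norm_add_le _ _).trans ?_
  have hν : ‖(‖x‖⁻¹ : ℝ)‖ * ‖innerSL ℝ x‖ = 1 := by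
    rw [innerSL_apply_norm, Real.norm_eq_abs, abs_of_pos (by positivity)]
    field_simp
  have hproj : ‖(EuclideanSpace.proj (⟨0, hn⟩ : Fin n) :
      EuclideanSpace ℝ (Fin n) →L[ℝ] ℝ)‖ ≤ 1 := by
    refine ContinuousLinearMap.opNorm_le_bound _ zero_le_one (fun y => ?_)
    rw [one_mul]
    simpa using coord_le_norm n ⟨0, hn⟩ y
  rw [norm_smul, norm_smul, norm_smul, hν, mul_one]
  have hsin : ‖(2 + Real.sin (Real.log (Real.log (Real.log (64 / ‖x‖)))))‖ ≤ 3 := by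
    rw [Real.norm_eq_abs]
    have := Real.neg_one_le_sin (Real.log (Real.log (Real.log (64 / ‖x‖))))
    have := Real.sin_le_one (Real.log (Real.log (Real.log (64 / ‖x‖))))
    rw [abs_le]; constructor <;> linarith
  have h2 : ‖(2 + Real.sin (Real.log (Real.log (Real.log (64 / ‖x‖)))))‖ *
      ‖(EuclideanSpace.proj (⟨0, hn⟩ : Fin n) :
        EuclideanSpace ℝ (Fin n) →L[ℝ] ℝ)‖ ≤ 3 := by
    have := mul_le_mul hsin hproj (norm_nonneg _) (by norm_num : (0:ℝ) ≤ 3)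
    linarith
  have h1 : ‖x ⟨0, hn⟩ * (-(Real.cos (Real.log (Real.log (Real.log (64 / ‖x‖))))) /
      (Real.log (Real.log (64 / ‖x‖)) * Real.log (64 / ‖x‖) * ‖x‖))‖ ≤ 1 := by
    rw [Real.norm_eq_abs, abs_mul, abs_div, abs_neg]
    have hcos := Real.abs_cos_le_one (Real.log (Real.log (Real.log (64 / ‖x‖))))
    have hc := coord_le_norm n ⟨0, hn⟩ x
    have hden : |Real.log (Real.log (64 / ‖x‖)) * Real.log (64 / ‖x‖) * ‖x‖| =
        Real.log (Real.log (64 / ‖x‖)) * Real.log (64 / ‖x‖) * ‖x‖ := by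
      apply abs_of_pos; positivity
    rw [hden]
    have hP : (0:ℝ) < Real.log (Real.log (64 / ‖x‖)) * Real.log (64 / ‖x‖) * ‖x‖ := by
      positivity
    rw [mul_comm, div_mul_eq_mul_div, div_le_one hP]
    have h3 : |Real.cos (Real.log (Real.log (Real.log (64 / ‖x‖))))| * |x ⟨0, hn⟩| ≤ 1 * ‖x‖ :=
      mul_le_mul hcos hc (abs_nonneg _) zero_le_one
    have h4 := mul_lt_mul_of_pos_right
      (mul_lt_mul'' hL2 hL1 zero_le_one (by norm_num)) hr
    linarith
  linarith

lemma fderiv_eval (n : ℕ) (hn : 0 < n) (θ : ℝ) (hcos : Real.cos θ = 0) :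
    fderiv ℝ (fun y : EuclideanSpace ℝ (Fin n) =>
      y ⟨0, hn⟩ * (2 + Real.sin (Real.log (Real.log (Real.log (64 / ‖y‖))))))
      ((64 * Real.exp (-(Real.exp (Real.exp θ)))) •
        EuclideanSpace.single (⟨0, hn⟩ : Fin n) (1:ℝ))
      (EuclideanSpace.single (⟨0, hn⟩ : Fin n) (1:ℝ)) = 2 + Real.sin θ := by
  set t : ℝ := 64 * Real.exp (-(Real.exp (Real.exp θ))) with ht_def
  have ht : 0 < t := by positivity
  set e₀ : EuclideanSpace ℝ (Fin n) := EuclideanSpace.single (⟨0, hn⟩ : Fin n) (1:ℝ) with he_def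
  have he : ‖e₀‖ = 1 := by rw [he_def, EuclideanSpace.norm_single]; norm_num
  have he0 : e₀ ≠ 0 := by intro h; rw [h] at he; simp at he
  set x : EuclideanSpace ℝ (Fin n) := t • e₀ with hx_def
  have hx : x ≠ 0 := smul_ne_zero ht.ne' he0
  have hnx : ‖x‖ = t := by
    rw [hx_def, norm_smul, he, mul_one, Real.norm_eq_abs, abs_of_pos ht]
  have h64 : 64 / ‖x‖ = Real.exp (Real.exp (Real.exp θ)) := by
    rw [hnx, ht_def, Real.exp_neg]
    field_simp
  have hL1 : Real.log (64 / ‖x‖) = Real.exp (Real.exp θ) := by rw [h64, Real.log_exp]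
  have hL2 : Real.log (Real.log (64 / ‖x‖)) = Real.exp θ := by rw [hL1, Real.log_exp]
  have hL3 : Real.log (Real.log (Real.log (64 / ‖x‖))) = θ := by rw [hL2, Real.log_exp]
  have hD := (hasFDerivAt_u n hn x hx (by rw [hL1]; exact (Real.exp_pos _).ne')
    (by rw [hL2]; exact (Real.exp_pos _).ne')).fderiv
  rw [hD]
  rw [ContinuousLinearMap.add_apply, ContinuousLinearMap.smul_apply,
    ContinuousLinearMap.smul_apply, ContinuousLinearMap.smul_apply]
  rw [hL3, hcos]
  simp only [neg_zero, zero_div, mul_zero, zero_smul, zero_add, smul_eq_mul]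
  have hproj : (EuclideanSpace.proj (⟨0, hn⟩ : Fin n) :
      EuclideanSpace ℝ (Fin n) →L[ℝ] ℝ) e₀ = 1 := by
    rw [he_def]
    simp
  rw [hproj, mul_one]
  ring


end Aux

theorem gradient_bounded_but_not_continuous (n : ℕ) (hn : 2 ≤ n) :
    let u : EuclideanSpace ℝ (Fin n) → ℝ := fun y =>
      y ⟨0, by omega⟩ * (2 + Real.sin (Real.log (Real.log (Real.log (64 / ‖y‖)))))
    (∃ M : ℝ, ∀ x ∈ ball (0 : EuclideanSpace ℝ (Fin n)) 4 \ {0},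
      ‖fderiv ℝ u x‖ ≤ M) ∧
    ¬ ∃ L : EuclideanSpace ℝ (Fin n) →L[ℝ] ℝ,
      Filter.Tendsto (fun x => fderiv ℝ u x)
        (nhdsWithin (0 : EuclideanSpace ℝ (Fin n)) {(0 : EuclideanSpace ℝ (Fin n))}ᶜ)
        (nhds L) := by
  intro u
  have hn0 : 0 < n := by omega
  refine ⟨⟨4, fun x hx => ?_⟩, ?_⟩
  · have hx0 : x ≠ 0 := by simpa using hx.2
    have hx4 : ‖x‖ < 4 := by simpa [mem_ball, dist_zero_right] using hx.1
    exact norm_fderiv_le n hn0 x hx0 hx4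
  · rintro ⟨L, hL⟩
    set e₀ : EuclideanSpace ℝ (Fin n) := EuclideanSpace.single (⟨0, hn0⟩ : Fin n) (1:ℝ)
      with he_def
    have he : ‖e₀‖ = 1 := by rw [he_def, EuclideanSpace.norm_single]; norm_num
    have he0 : e₀ ≠ 0 := fun h => by rw [h] at he; simp at he
    have key : ∀ θ₀ : ℝ, Real.cos θ₀ = 0 → L e₀ = 2 + Real.sin θ₀ := by
      intro θ₀ hcos
      set a : ℕ → EuclideanSpace ℝ (Fin n) := fun k =>
        (64 * Real.exp (-(Real.exp (Real.exp (θ₀ + k * (2 * Real.pi)))))) • e₀ with ha_def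
      have hθT : Filter.Tendsto (fun k : ℕ => θ₀ + k * (2 * Real.pi))
          Filter.atTop Filter.atTop := by
        apply Filter.tendsto_atTop_add_const_left
        exact Filter.Tendsto.atTop_mul_const (by positivity) tendsto_natCast_atTop_atTop
      have htt : Filter.Tendsto (fun k : ℕ =>
          64 * Real.exp (-(Real.exp (Real.exp (θ₀ + k * (2 * Real.pi))))))
          Filter.atTop (nhds 0) := by
        have h1 := Real.tendsto_exp_atTop.comp (Real.tendsto_exp_atTop.comp hθT)
        have h2 := Real.tendsto_exp_neg_atTop_nhds_zero.comp h1
        have h3 := h2.const_mul (64:ℝ)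
        simpa [Function.comp_def] using h3
      have ha0 : Filter.Tendsto a Filter.atTop (nhds 0) := by
        have := htt.smul_const e₀
        simpa using this
      have haW : Filter.Tendsto a Filter.atTop
          (nhdsWithin 0 {(0 : EuclideanSpace ℝ (Fin n))}ᶜ) := by
        refine tendsto_nhdsWithin_of_tendsto_nhds_of_eventually_within _ ha0
          (Filter.Eventually.of_forall fun k => ?_)
        simp only [Set.mem_compl_iff, Set.mem_singleton_iff]
        exact smul_ne_zero (by positivity) he0
      have hev : Filter.Tendsto (fun k => (fderiv ℝ u (a k)) e₀)
          Filter.atTop (nhds (L e₀)) :=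
        ((ContinuousLinearMap.apply ℝ ℝ e₀).continuous.tendsto L).comp (hL.comp haW)
      have heq : (fun k => (fderiv ℝ u (a k)) e₀) = fun _ => 2 + Real.sin θ₀ := by
        funext k
        have hc : Real.cos (θ₀ + k * (2 * Real.pi)) = 0 := by
          rw [Real.cos_add_nat_mul_two_pi, hcos]
        have hval := fderiv_eval n hn0 (θ₀ + k * (2 * Real.pi)) hc
        rw [Real.sin_add_nat_mul_two_pi] at hval
        exact hval
      rw [heq] at hev
      exact tendsto_nhds_unique hev tendsto_const_nhds
    have h3 := key (Real.pi / 2) Real.cos_pi_div_two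
    have h1 := key (-(Real.pi / 2)) (by rw [Real.cos_neg, Real.cos_pi_div_two])
    rw [Real.sin_pi_div_two] at h3
    rw [Real.sin_neg, Real.sin_pi_div_two] at h1
    rw [h3] at h1
    norm_num at h1
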